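/- arXiv:1107.0386 — 3 statements merged into one kernel-verified Lean document; each statement's English description precedes it below -/
import Mathlib

section
/- Suppose E₀ : [−d, d] → ℝ is a continuous function with E₀(a) − E₀(c) ≥ (1/C₂)·|a − c| for the endpoint c ∈ {−d, d} closest to a, where C₂ > 0. Fix δ ∈ (0, 2d·√1) with δ < d. If H(a) and H(c) are self-adjoint operators bounded below with min spectrum E₀(a), E₀(c) respectively, satisfying ‖H(a) − H(c)‖ ≤ 2M (as bounded perturbation), and if E₀(a) − E* ≥ δ/C₂ where E* = min over all positions, then H(a) − E* ≥ (1/C_δ)·(H(c) − E* + |a−c|) in quadratic form sense, where C_δ = min(1/(C+1), δ/(2(C+1)C₂·d))⁻¹ with C = 1 + 2C₂M/δ. -/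
open scoped RealInnerProductSpace

private lemma stmt2_aux (K C₂ δ dmax Qa Qc ac n Estar : ℝ)
    (hK0 : 0 < K) (hC₂ : 0 < C₂) (hδ : 0 < δ) (hdmax : 0 < dmax)
    (hn0 : 0 ≤ n) (hac0 : 0 ≤ ac) (hac2 : ac ≤ 2 * dmax)
    (hQc0 : 0 ≤ Qc - Estar * n)
    (hclaim1 : Qc - Estar * n ≤ (K - 1) * (Qa - Estar * n))
    (hSn : δ * n ≤ C₂ * (Qa - Estar * n)) :
    min (1 / K) (δ / (2 * K * C₂ * dmax)) * (Qc - Estar * n + ac * n)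
      ≤ Qa - Estar * n := by
  have hS0 : 0 ≤ Qa - Estar * n := by nlinarith
  have hA : min (1 / K) (δ / (2 * K * C₂ * dmax)) * (Qc - Estar * n)
      ≤ (1 / K) * ((K - 1) * (Qa - Estar * n)) :=
    mul_le_mul (min_le_left _ _) hclaim1 hQc0 (by positivity)
  have hB : min (1 / K) (δ / (2 * K * C₂ * dmax)) * (ac * n)
      ≤ (δ / (2 * K * C₂ * dmax)) * (2 * dmax * n) :=
    mul_le_mul (min_le_right _ _) (mul_le_mul_of_nonneg_right hac2 hn0)
      (mul_nonneg hac0 hn0) (by positivity)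
  have hB' : (δ / (2 * K * C₂ * dmax)) * (2 * dmax * n) = (δ * n) / (K * C₂) := by
    field_simp
  have hB'' : (δ * n) / (K * C₂) ≤ (Qa - Estar * n) / K := by
    rw [div_le_div_iff₀ (by positivity) hK0]
    nlinarith [mul_le_mul_of_nonneg_right hSn (le_of_lt hK0)]
  have hA' : (1 / K) * ((K - 1) * (Qa - Estar * n))
      = (Qa - Estar * n) - (Qa - Estar * n) / K := by
    field_simp
  nlinarith [hA, hB, hB'', hB'.le, hB'.ge, hA'.le, hA'.ge]

/-- "Far from the corners" comparison: if `E₀(a) − E* ≥ δ/C₂`, then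
`H(a) − E* ≥ (1/C_δ)(H(c) − E* + |a−c|)` with `C_δ⁻¹ = min(1/(C+1), δ/(2(C+1)C₂ d))`,
`C = 1 + 2C₂M/δ`. -/
theorem stmt2 {H : Type*} [NormedAddCommGroup H] [InnerProductSpace ℝ H]
    (dmax C₂ δ M Estar : ℝ) (hdmax : 0 < dmax) (hC₂ : 0 < C₂) (hδ : 0 < δ)
    (hδd : δ < dmax) (hM : 0 < M)
    (a c : ℝ) (ha : a ∈ Set.Icc (-dmax) dmax) (hcorner : c = -dmax ∨ c = dmax)
    (hclosest : |a - c| = min |a - dmax| |a + dmax|)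
    (Ha Hc : H →L[ℝ] H) (E₀a E₀c : ℝ)
    (hHa_lb : ∀ x : H, E₀a * ‖x‖ ^ 2 ≤ ⟪x, Ha x⟫)
    (hHc_lb : ∀ x : H, E₀c * ‖x‖ ^ 2 ≤ ⟪x, Hc x⟫)
    (hpert : ‖Ha - Hc‖ ≤ 2 * M)
    (hlin : (1 / C₂) * |a - c| ≤ E₀a - E₀c)
    (hEstarc : Estar ≤ E₀c) (hEstara : Estar ≤ E₀a)
    (hfar : δ / C₂ ≤ E₀a - Estar) :
    ∀ x : H,
      min (1 / ((1 + 2 * C₂ * M / δ) + 1))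
          (δ / (2 * ((1 + 2 * C₂ * M / δ) + 1) * C₂ * dmax)) *
        (⟪x, Hc x⟫ - Estar * ‖x‖ ^ 2 + |a - c| * ‖x‖ ^ 2)
      ≤ ⟪x, Ha x⟫ - Estar * ‖x‖ ^ 2 := by
  intro x
  obtain ⟨ha1, ha2⟩ := ha
  have hn0 : (0:ℝ) ≤ ‖x‖ ^ 2 := by positivity
  have hac0 : 0 ≤ |a - c| := abs_nonneg _
  have hac2 : |a - c| ≤ 2 * dmax := by
    rcases hcorner with rfl | rfl <;> rw [abs_le] <;> constructor <;> linarith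
  have hQa : E₀a * ‖x‖ ^ 2 ≤ ⟪x, Ha x⟫ := hHa_lb x
  have hQc : E₀c * ‖x‖ ^ 2 ≤ ⟪x, Hc x⟫ := hHc_lb x
  have hpertx : ⟪x, Hc x⟫ - ⟪x, Ha x⟫ ≤ 2 * M * ‖x‖ ^ 2 := by
    have h1 : ⟪x, Hc x⟫ - ⟪x, Ha x⟫ = ⟪x, (Hc - Ha) x⟫ := by
      simp [ContinuousLinearMap.sub_apply, inner_sub_right]
    have h2 : ⟪x, (Hc - Ha) x⟫ ≤ ‖x‖ * ‖(Hc - Ha) x‖ := real_inner_le_norm _ _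
    have h3 : ‖(Hc - Ha) x‖ ≤ ‖Hc - Ha‖ * ‖x‖ := (Hc - Ha).le_opNorm x
    have h4 : ‖Hc - Ha‖ = ‖Ha - Hc‖ := norm_sub_rev _ _
    have h5 : 0 ≤ ‖x‖ := norm_nonneg x
    rw [h1]
    nlinarith [norm_nonneg (Hc - Ha), norm_nonneg ((Hc - Ha) x)]
  have hS : δ / C₂ * ‖x‖ ^ 2 ≤ ⟪x, Ha x⟫ - Estar * ‖x‖ ^ 2 := by nlinarith
  have hSn : δ * ‖x‖ ^ 2 ≤ C₂ * (⟪x, Ha x⟫ - Estar * ‖x‖ ^ 2) := by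
    have h := mul_le_mul_of_nonneg_left hS (le_of_lt hC₂)
    have h2 : C₂ * (δ / C₂ * ‖x‖ ^ 2) = δ * ‖x‖ ^ 2 := by
      field_simp
    linarith
  have hQc0 : 0 ≤ ⟪x, Hc x⟫ - Estar * ‖x‖ ^ 2 := by nlinarith
  have hclaim1 : ⟪x, Hc x⟫ - Estar * ‖x‖ ^ 2
      ≤ ((1 + 2 * C₂ * M / δ + 1) - 1) * (⟪x, Ha x⟫ - Estar * ‖x‖ ^ 2) := by
    have h6 : 2 * M * ‖x‖ ^ 2 ≤ (2 * C₂ * M / δ) * (⟪x, Ha x⟫ - Estar * ‖x‖ ^ 2) := by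
      rw [div_mul_eq_mul_div, le_div_iff₀ hδ]
      nlinarith [mul_le_mul_of_nonneg_left hSn (le_of_lt hM)]
    have h7 : ((1 + 2 * C₂ * M / δ + 1) - 1) * (⟪x, Ha x⟫ - Estar * ‖x‖ ^ 2)
        = (⟪x, Ha x⟫ - Estar * ‖x‖ ^ 2) + (2 * C₂ * M / δ) * (⟪x, Ha x⟫ - Estar * ‖x‖ ^ 2) := by
      ring
    linarith
  exact stmt2_aux ((1 + 2 * C₂ * M / δ) + 1) C₂ δ dmax ⟪x, Ha x⟫ ⟪x, Hc x⟫
    (|a - c|) (‖x‖ ^ 2) Estar (by positivity) hC₂ hδ hdmax hn0 hac0 hac2 hQc0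
    hclaim1 hSn
end

section
/- Let E : [−d, d]ᵈ → ℝ be C¹, reflection-symmetric in each coordinate, and suppose ∂_j E(a) < 0 whenever a_j > 0, for each j. Then there exists C₂ > 0 such that E(a) − min E ≥ (1/C₂)·D(a) for all a, where D(a) is the Euclidean distance from a to the set of corners {(±d,…,±d)}. -/
private lemma sqrt_sum_sq_le_sum_abs {n : ℕ} (f : Fin n → ℝ) :
    Real.sqrt (∑ i, (f i) ^ 2) ≤ ∑ i, |f i| := by
  have h1 : ∑ i, (f i) ^ 2 = ∑ i, |f i| ^ 2 := by simp [sq_abs]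
  rw [h1]
  calc Real.sqrt (∑ i, |f i| ^ 2)
      ≤ Real.sqrt ((∑ i, |f i|) ^ 2) :=
        Real.sqrt_le_sqrt (Finset.sum_sq_le_sq_sum_of_nonneg (fun i _ => abs_nonneg _))
    _ = ∑ i, |f i| := Real.sqrt_sq (Finset.sum_nonneg fun i _ => abs_nonneg _)

/-- Multidimensional linear growth bound (6.2): if `E` is `C¹`, reflection-symmetric in
each coordinate, with `∂_j E(a) < 0` whenever `a_j > 0` on the cube, then
`E(a) − min E ≥ (1/C₂) D(a)` where `D(a)` is the Euclidean distance to the corners. -/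
theorem stmt8 {n : ℕ} (d : ℝ) (hd : 0 < d) (E : (Fin n → ℝ) → ℝ)
    (hE : ContDiff ℝ 1 E)
    (hsym : ∀ (a : Fin n → ℝ) (j : Fin n), E (Function.update a j (-(a j))) = E a)
    (hderiv : ∀ (a : Fin n → ℝ) (j : Fin n), (∀ i, |a i| ≤ d) → 0 < a j →
      fderiv ℝ E a (Pi.single j 1) < 0) :
    ∃ C₂ > (0 : ℝ), ∀ a : Fin n → ℝ, (∀ i, |a i| ≤ d) →
      (1 / C₂) * sInf {r : ℝ | ∃ c : Fin n → ℝ, (∀ i, c i = d ∨ c i = -d) ∧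
          r = Real.sqrt (∑ i, (a i - c i) ^ 2)}
        ≤ E a - sInf (E '' {a : Fin n → ℝ | ∀ i, |a i| ≤ d}) := by
  classical
  rcases Nat.eq_zero_or_pos n with hn | hn
  · -- trivial case n = 0
    subst hn
    refine ⟨1, one_pos, fun a ha => ?_⟩
    have h1 : {r : ℝ | ∃ c : Fin 0 → ℝ, (∀ i, c i = d ∨ c i = -d) ∧
        r = Real.sqrt (∑ i, (a i - c i) ^ 2)} = {0} := by
      ext r
      simp only [Set.mem_setOf_eq, Set.mem_singleton_iff]
      constructor
      · rintro ⟨c, _, rfl⟩; simp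
      · rintro rfl
        exact ⟨fun i => i.elim0, fun i => i.elim0, by simp⟩
    have h2 : E '' {a : Fin 0 → ℝ | ∀ i, |a i| ≤ d} = {E a} := by
      ext y
      simp only [Set.mem_image, Set.mem_singleton_iff, Set.mem_setOf_eq]
      constructor
      · rintro ⟨x, _, rfl⟩
        congr 1
        funext i; exact i.elim0
      · rintro rfl; exact ⟨a, ha, rfl⟩
    rw [h1, h2, csInf_singleton, csInf_singleton]
    simp
  have hnetriv : Nonempty (Fin n) := ⟨⟨0, hn⟩⟩
  set cube : Set (Fin n → ℝ) := {a | ∀ i, |a i| ≤ d} with hcubedef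
  set c : Fin n → ℝ := fun _ => d with hcdef
  have hccube : c ∈ cube := fun i => by simp [hcdef, abs_of_pos hd]
  have hEdiff : Differentiable ℝ E := hE.differentiable one_ne_zero
  -- derivative of the slice map
  have hslice : ∀ (x : Fin n → ℝ) (j : Fin n) (t : ℝ),
      HasDerivAt (fun s => E (Function.update x j s))
        (fderiv ℝ E (Function.update x j t) (Pi.single j 1)) t := by
    intro x j t
    have hL : ∀ s : ℝ, Function.update x j s = x + (s - x j) • (Pi.single j 1 : Fin n → ℝ) := by
      intro s; funext i
      by_cases h : i = j
      · subst h; simp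
      · simp [Function.update_of_ne h, Pi.single_eq_of_ne h]
    have hL2 : HasDerivAt (fun s : ℝ => Function.update x j s) ((Pi.single j 1 : Fin n → ℝ)) t := by
      have h1 : HasDerivAt (fun s : ℝ => s - x j) 1 t := (hasDerivAt_id t).sub_const _
      have h2 : HasDerivAt (fun s : ℝ => x + (s - x j) • (Pi.single j 1 : Fin n → ℝ))
          ((Pi.single j 1 : Fin n → ℝ)) t := by
        simpa using (h1.smul_const ((Pi.single j 1 : Fin n → ℝ))).const_add x
      have heq : (fun s : ℝ => Function.update x j s)
          = fun s : ℝ => x + (s - x j) • (Pi.single j 1 : Fin n → ℝ) := funext hL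
      rw [heq]; exact h2
    exact (hEdiff (Function.update x j t)).hasFDerivAt.comp_hasDerivAt t hL2
  -- strict single-coordinate step
  have hstep_lt : ∀ x ∈ cube, ∀ j : Fin n, 0 ≤ x j → x j < d →
      E (Function.update x j d) < E x := by
    intro x hx j h0 hlt
    have hcont : Continuous (fun s : ℝ => E (Function.update x j s)) :=
      hE.continuous.comp (continuous_const.update j continuous_id)
    have hanti : StrictAntiOn (fun s : ℝ => E (Function.update x j s)) (Set.Icc 0 d) := by
      apply strictAntiOn_of_deriv_neg (convex_Icc 0 d) hcont.continuousOn
      intro t ht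
      rw [interior_Icc] at ht
      rw [(hslice x j t).deriv]
      apply hderiv
      · intro i
        by_cases h : i = j
        · subst h
          rw [Function.update_self, abs_of_pos ht.1]
          exact ht.2.le
        · rw [Function.update_of_ne h]; exact hx i
      · rw [Function.update_self]; exact ht.1
    have h := hanti (Set.mem_Icc.mpr ⟨h0, hlt.le⟩) (Set.mem_Icc.mpr ⟨hd.le, le_refl d⟩) hlt
    simpa [Function.update_eq_self] using h
  have hstep_le : ∀ x ∈ cube, ∀ j : Fin n, 0 ≤ x j →
      E (Function.update x j d) ≤ E x := by
    intro x hx j h0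
    rcases lt_or_eq_of_le ((le_abs_self _).trans (hx j)) with h | h
    · exact (hstep_lt x hx j h0 h).le
    · rw [← h, Function.update_eq_self]
  -- chain to the corner
  have hchain : ∀ b : Fin n → ℝ, (∀ i, 0 ≤ b i ∧ b i ≤ d) → E c ≤ E b := by
    intro b hb
    have key : ∀ S : Finset (Fin n), E (fun i => if i ∈ S then d else b i) ≤ E b := by
      intro S
      induction S using Finset.induction_on with
      | empty => simp
      | @insert j S hj ih =>
          set x : Fin n → ℝ := fun i => if i ∈ S then d else b i with hxdef
          have hxcube : x ∈ cube := by
            intro i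
            by_cases h : i ∈ S <;>
              simp only [hxdef, h, if_true, if_false] <;>
              rw [abs_le] <;> constructor <;> linarith [(hb i).1, (hb i).2]
          have hxj : x j = b j := by simp [hxdef, hj]
          have heq : (fun i => if i ∈ insert j S then d else b i) = Function.update x j d := by
            funext i
            by_cases h : i = j
            · subst h; simp [Function.update_self, hxdef]
            · simp [Function.update_of_ne h, hxdef, Finset.mem_insert, h]
          rw [heq]
          exact le_trans (hstep_le x hxcube j (hxj ▸ (hb j).1)) ih
    have h := key Finset.univ
    simpa [hcdef] using h
  -- reflection to absolute values
  have habs : ∀ a : Fin n → ℝ, E (fun i => |a i|) = E a := by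
    intro a
    have key : ∀ S : Finset (Fin n), E (fun i => if i ∈ S then |a i| else a i) = E a := by
      intro S
      induction S using Finset.induction_on with
      | empty => simp
      | @insert j S hj ih =>
          set f : Fin n → ℝ := fun i => if i ∈ S then |a i| else a i with hfdef
          have hfj : f j = a j := by simp [hfdef, hj]
          have heq : (fun i => if i ∈ insert j S then |a i| else a i)
              = Function.update f j |a j| := by
            funext i
            by_cases h : i = j
            · subst h; simp [Function.update_self]
            · simp [Function.update_of_ne h, hfdef, Finset.mem_insert, h]
          rw [heq]
          rcases abs_choice (a j) with h | h
          · rw [h, ← hfj, Function.update_eq_self]; exact ih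
          · rw [h, ← hfj, hsym f j]; exact ih
    have h := key Finset.univ
    simpa using h
  have hEc_le : ∀ a ∈ cube, E c ≤ E a := by
    intro a ha
    rw [← habs a]
    exact hchain (fun i => |a i|) (fun i => ⟨abs_nonneg _, ha i⟩)
  have hm : sInf (E '' cube) = E c := by
    apply le_antisymm
    · exact csInf_le ⟨E c, by rintro y ⟨x, hx, rfl⟩; exact hEc_le x hx⟩ ⟨c, hccube, rfl⟩
    · exact le_csInf ⟨E c, c, hccube, rfl⟩ (by rintro y ⟨x, hx, rfl⟩; exact hEc_le x hx)
  -- strict inequality away from the corners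
  have hstrict : ∀ a ∈ cube, ∀ j : Fin n, |a j| ≤ d / 2 → E c < E a := by
    intro a ha j hj
    rw [← habs a]
    set b : Fin n → ℝ := fun i => |a i| with hbdef
    have hbcube : b ∈ cube := fun i => by
      simpa [hbdef, abs_abs] using ha i
    have hbj : b j < d := lt_of_le_of_lt hj (by linarith)
    have h1 : E (Function.update b j d) < E b := hstep_lt b hbcube j (abs_nonneg _) hbj
    refine lt_of_le_of_lt ?_ h1
    apply hchain
    intro i
    by_cases h : i = j
    · subst h; rw [Function.update_self]; exact ⟨hd.le, le_refl d⟩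
    · rw [Function.update_of_ne h]; exact ⟨abs_nonneg _, ha i⟩
  -- compactness of the cube
  have hcubecompact : IsCompact cube := by
    have heq : cube = Set.pi Set.univ (fun _ : Fin n => Set.Icc (-d) d) := by
      ext a
      simp [hcubedef, Set.mem_pi, abs_le, Pi.le_def, forall_and]
    rw [heq]
    exact isCompact_univ_pi fun _ => isCompact_Icc
  -- uniform negative derivative near the corner faces
  have hgcont : ∀ j : Fin n, Continuous fun y => fderiv ℝ E y (Pi.single j 1) :=
    fun j => (hE.continuous_fderiv one_ne_zero).clm_apply continuous_const
  have hkappa : ∀ j : Fin n, ∃ κ > (0:ℝ), ∀ y ∈ cube, d / 2 ≤ y j →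
      fderiv ℝ E y (Pi.single j 1) ≤ -κ := by
    intro j
    set K : Set (Fin n → ℝ) := cube ∩ {y | d / 2 ≤ y j} with hKdef
    have hKc : IsCompact K :=
      hcubecompact.inter_right (isClosed_le continuous_const (continuous_apply j))
    have hKne : K.Nonempty := ⟨c, hccube, by simp only [Set.mem_setOf_eq, hcdef]; linarith⟩
    obtain ⟨y₀, hy₀K, hy₀max⟩ := hKc.exists_isMaxOn hKne ((hgcont j).continuousOn)
    have hy₀neg : fderiv ℝ E y₀ (Pi.single j 1) < 0 :=
      hderiv y₀ j hy₀K.1 (lt_of_lt_of_le (by linarith) hy₀K.2)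
    refine ⟨-(fderiv ℝ E y₀ (Pi.single j 1)), by linarith, ?_⟩
    intro y hy hyj
    have := hy₀max (Set.mem_inter hy hyj)
    simpa using this
  choose κf hκfpos hκf using hkappa
  set κ : ℝ := Finset.univ.inf' Finset.univ_nonempty κf with hκdef
  have hκpos : 0 < κ := by
    rw [hκdef, Finset.lt_inf'_iff]
    exact fun j _ => hκfpos j
  have hκle : ∀ j : Fin n, κ ≤ κf j := fun j => Finset.inf'_le _ (Finset.mem_univ j)
  -- quantitative single-coordinate step
  have hstep_quant : ∀ x ∈ cube, ∀ j : Fin n, d / 2 ≤ x j →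
      κ * (d - x j) ≤ E x - E (Function.update x j d) := by
    intro x hx j hxj
    have hxjd : x j ≤ d := (le_abs_self _).trans (hx j)
    have hψcont : Continuous (fun t : ℝ => E (Function.update x j t) + κ * t) :=
      (hE.continuous.comp (continuous_const.update j continuous_id)).add
        (continuous_const.mul continuous_id)
    have hψd : ∀ t : ℝ, HasDerivAt (fun t : ℝ => E (Function.update x j t) + κ * t)
        (fderiv ℝ E (Function.update x j t) (Pi.single j 1) + κ * 1) t :=
      fun t => (hslice x j t).add ((hasDerivAt_id t).const_mul κ)
    have hψanti : AntitoneOn (fun t : ℝ => E (Function.update x j t) + κ * t)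
        (Set.Icc (x j) d) := by
      apply antitoneOn_of_deriv_nonpos (convex_Icc _ _) hψcont.continuousOn
      · intro t ht
        exact ((hψd t).differentiableAt).differentiableWithinAt
      · intro t ht
        rw [interior_Icc] at ht
        rw [(hψd t).deriv]
        have htc : Function.update x j t ∈ cube := by
          intro i
          by_cases h : i = j
          · subst h
            rw [Function.update_self, abs_le]
            constructor <;> linarith [ht.1, ht.2]
          · rw [Function.update_of_ne h]; exact hx i
        have htj : d / 2 ≤ (Function.update x j t) j := by
          rw [Function.update_self]; linarith [ht.1]
        have := hκf j (Function.update x j t) htc htj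
        have := hκle j
        linarith
    have h := hψanti (Set.mem_Icc.mpr ⟨le_refl _, hxjd⟩) (Set.mem_Icc.mpr ⟨hxjd, le_refl _⟩) hxjd
    simp only [Function.update_eq_self] at h
    linarith
  -- quantitative chain to the corner
  have hchain_quant : ∀ b : Fin n → ℝ, (∀ i, d / 2 ≤ b i ∧ b i ≤ d) →
      κ * (∑ i, (d - b i)) ≤ E b - E c := by
    intro b hb
    have key : ∀ S : Finset (Fin n), κ * (∑ i ∈ S, (d - b i))
        ≤ E b - E (fun i => if i ∈ S then d else b i) := by
      intro S
      induction S using Finset.induction_on with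
      | empty => simp
      | @insert j S hj ih =>
          set x : Fin n → ℝ := fun i => if i ∈ S then d else b i with hxdef
          have hxcube : x ∈ cube := by
            intro i
            by_cases h : i ∈ S <;>
              simp only [hxdef, h, if_true, if_false] <;>
              rw [abs_le] <;> constructor <;> linarith [(hb i).1, (hb i).2]
          have hxj : x j = b j := by simp [hxdef, hj]
          have heq : (fun i => if i ∈ insert j S then d else b i) = Function.update x j d := by
            funext i
            by_cases h : i = j
            · subst h; simp [Function.update_self, hxdef]
            · simp [Function.update_of_ne h, hxdef, Finset.mem_insert, h]
          rw [heq, Finset.sum_insert hj, mul_add]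
          have h2 := hstep_quant x hxcube j (hxj ▸ (hb j).1)
          rw [hxj] at h2
          linarith
    have h := key Finset.univ
    have heqc : (fun i => if i ∈ Finset.univ then d else b i) = c := by
      funext i; simp [hcdef]
    rw [heqc] at h
    exact h
  -- minimum on the region away from the corners
  set K2 : Set (Fin n → ℝ) := cube ∩ (⋃ j : Fin n, {a : Fin n → ℝ | |a j| ≤ d / 2}) with hK2def
  have hK2c : IsCompact K2 :=
    hcubecompact.inter_right (isClosed_iUnion_of_finite fun j =>
      isClosed_le ((continuous_apply j).abs) continuous_const)
  have hK2ne : K2.Nonempty := by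
    refine ⟨0, fun i => by simpa using hd.le, Set.mem_iUnion.mpr ⟨⟨0, hn⟩, ?_⟩⟩
    simp only [Set.mem_setOf_eq, Pi.zero_apply, abs_zero]
    linarith
  obtain ⟨x₀, hx₀K, hx₀min⟩ := hK2c.exists_isMinOn hK2ne hE.continuous.continuousOn
  have hδpos : 0 < E x₀ - E c := by
    obtain ⟨j, hj⟩ := Set.mem_iUnion.mp hx₀K.2
    have := hstrict x₀ hx₀K.1 j hj
    linarith
  set δ : ℝ := E x₀ - E c with hδdef
  -- final constant
  set C₂ : ℝ := max (1 / κ) ((2 * d * n) / δ) with hC₂def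
  have hC₂pos : 0 < C₂ := lt_max_of_lt_left (by positivity)
  refine ⟨C₂, hC₂pos, ?_⟩
  intro a ha
  rw [hm]
  set S : Set ℝ := {r : ℝ | ∃ c' : Fin n → ℝ, (∀ i, c' i = d ∨ c' i = -d) ∧
      r = Real.sqrt (∑ i, (a i - c' i) ^ 2)} with hSdef
  have hSbdd : BddBelow S := ⟨0, by rintro r ⟨c', _, rfl⟩; exact Real.sqrt_nonneg _⟩
  by_cases hcase : ∀ j : Fin n, d / 2 ≤ |a j|
  · -- near a corner: linear estimate
    set b : Fin n → ℝ := fun i => |a i| with hbdef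
    have hb : ∀ i, d / 2 ≤ b i ∧ b i ≤ d := fun i => ⟨hcase i, ha i⟩
    set c' : Fin n → ℝ := fun i => if 0 ≤ a i then d else -d with hc'def
    have hcor : ∀ i, c' i = d ∨ c' i = -d := by
      intro i
      by_cases h : 0 ≤ a i <;> simp [hc'def, h]
    have hsq : ∀ i, (a i - c' i) ^ 2 = (d - b i) ^ 2 := by
      intro i
      by_cases h : 0 ≤ a i
      · simp only [hc'def, hbdef, h, if_true, abs_of_nonneg h]; ring
      · push_neg at h
        simp only [hc'def, hbdef, if_neg (not_le.mpr h), abs_of_neg h]; ring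
    have hT : Real.sqrt (∑ i, (a i - c' i) ^ 2) ≤ ∑ i, (d - b i) := by
      have h1 : ∑ i, (a i - c' i) ^ 2 = ∑ i, (d - b i) ^ 2 :=
        Finset.sum_congr rfl fun i _ => hsq i
      rw [h1]
      calc Real.sqrt (∑ i, (d - b i) ^ 2) ≤ ∑ i, |d - b i| := sqrt_sum_sq_le_sum_abs _
        _ = ∑ i, (d - b i) := Finset.sum_congr rfl fun i _ =>
            abs_of_nonneg (by linarith [(hb i).2])
    have hsInf_le : sInf S ≤ ∑ i, (d - b i) :=
      le_trans (csInf_le hSbdd ⟨c', hcor, rfl⟩) hT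
    have hT0 : 0 ≤ ∑ i, (d - b i) :=
      Finset.sum_nonneg fun i _ => by linarith [(hb i).2]
    have hE1 : κ * (∑ i, (d - b i)) ≤ E a - E c := by
      have := hchain_quant b hb
      rw [habs a] at this
      exact this
    have hκ' : 1 / C₂ ≤ κ := by
      have h1 : 1 / κ ≤ C₂ := le_max_left _ _
      calc 1 / C₂ ≤ 1 / (1 / κ) := one_div_le_one_div_of_le (by positivity) h1
        _ = κ := one_div_one_div κ
    calc (1 / C₂) * sInf S ≤ (1 / C₂) * (∑ i, (d - b i)) := by
          apply mul_le_mul_of_nonneg_left hsInf_le (by positivity)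
      _ ≤ κ * (∑ i, (d - b i)) := mul_le_mul_of_nonneg_right hκ' hT0
      _ ≤ E a - E c := hE1
  · -- away from the corners: uniform positive gap
    push_neg at hcase
    obtain ⟨j, hj⟩ := hcase
    have haK2 : a ∈ K2 :=
      Set.mem_inter ha (Set.mem_iUnion.mpr ⟨j, le_of_lt hj⟩)
    have hgap : δ ≤ E a - E c := by
      have := hx₀min haK2
      simp only [hδdef]
      linarith [show E x₀ ≤ E a from this]
    have hsInf_le : sInf S ≤ 2 * d * n := by
      refine le_trans (csInf_le hSbdd ⟨c, fun i => Or.inl rfl, rfl⟩) ?_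
      calc Real.sqrt (∑ i, (a i - c i) ^ 2) ≤ ∑ i, |a i - c i| := sqrt_sum_sq_le_sum_abs _
        _ ≤ ∑ i : Fin n, 2 * d := by
            apply Finset.sum_le_sum
            intro i _
            have h1 := abs_sub (a i) (c i)
            have h2 : |c i| = d := by simp [hcdef, abs_of_pos hd]
            calc |a i - c i| ≤ |a i| + |c i| := abs_sub _ _
              _ ≤ d + d := by rw [h2]; linarith [ha i]
              _ = 2 * d := by ring
        _ = 2 * d * n := by
            rw [Finset.sum_const, Finset.card_univ, Fintype.card_fin, nsmul_eq_mul]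
            ring
    have hfin : (1 / C₂) * (2 * d * n) ≤ δ := by
      have h1 : (2 * d * n) / δ ≤ C₂ := le_max_right _ _
      have h2 : 2 * d * n ≤ C₂ * δ := by
        rwa [div_le_iff₀ hδpos] at h1
      rw [div_mul_eq_mul_div, one_mul, div_le_iff₀ hC₂pos]
      linarith
    calc (1 / C₂) * sInf S ≤ (1 / C₂) * (2 * d * n) :=
          mul_le_mul_of_nonneg_left hsInf_le (by positivity)
      _ ≤ δ := hfin
      _ ≤ E a - E c := hgap
end

section
/- Let Λ = (−1/2, 1/2) and let φ₀ ∈ H¹(Λ) be positive with φ₀(−1/2) = h ≠ k = φ₀(1/2). For an L-periodic sequence (ω_n) with each ω_n ∈ {+1, −1}, define a continuous function ψ on ℝ by pasting on each interval (n−1/2, n+1/2) the function c_n·φ₀(ε_n(x−n)) where ε_n = ω_n and the constants c_n > 0 are chosen for continuity at half-integers. Then ψ can be extended to an L-periodic continuous function on ℝ if and only if L is even and #{n in a period : ω_n = +1} = #{n in a period : ω_n = −1}. -/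
private noncomputable def Aw (ω : ℤ → ℤ) (n : ℤ) : ℤ :=
  (∑ j ∈ Finset.Ico (0:ℤ) n, ω j) - ∑ j ∈ Finset.Ico n (0:ℤ), ω j

private lemma Aw_succ (ω : ℤ → ℤ) (n : ℤ) : Aw ω (n + 1) = Aw ω n + ω n := by
  rcases le_or_gt 0 n with hn | hn
  · have h1 : Finset.Ico n (0:ℤ) = ∅ := Finset.Ico_eq_empty (by omega)
    have h2 : Finset.Ico (n+1) (0:ℤ) = ∅ := Finset.Ico_eq_empty (by omega)
    have h3 : Finset.Ico (0:ℤ) (n+1) = insert n (Finset.Ico (0:ℤ) n) := by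
      ext j; simp only [Finset.mem_Ico, Finset.mem_insert]; omega
    have h4 : n ∉ Finset.Ico (0:ℤ) n := by simp
    simp [Aw, h1, h2, h3, Finset.sum_insert h4]
    try ring
  · have h1 : Finset.Ico (0:ℤ) n = ∅ := Finset.Ico_eq_empty (by omega)
    have h2 : Finset.Ico (0:ℤ) (n+1) = ∅ := Finset.Ico_eq_empty (by omega)
    have h3 : Finset.Ico n (0:ℤ) = insert n (Finset.Ico (n+1) (0:ℤ)) := by
      ext j; simp only [Finset.mem_Ico, Finset.mem_insert]; omega
    have h4 : n ∉ Finset.Ico (n+1) (0:ℤ) := by simp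
    simp [Aw, h1, h2, h3, Finset.sum_insert h4]
    try ring

private lemma Aw_add_nat (ω : ℤ → ℤ) (n : ℤ) (m : ℕ) :
    Aw ω (n + m) = Aw ω n + ∑ i ∈ Finset.range m, ω (n + i) := by
  induction m with
  | zero => simp
  | succ p ih =>
      have h : (n + (↑(p+1) : ℤ)) = (n + p) + 1 := by push_cast; ring
      rw [h, Aw_succ, ih, Finset.sum_range_succ]
      have h2 : ((↑(p) : ℤ)) = ((p:ℕ) : ℤ) := rfl
      push_cast
      ring

private lemma zpow_eq_one_imp {t : ℝ} (ht : 0 < t) (ht1 : t ≠ 1) {z : ℤ} (h : t ^ z = 1) :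
    z = 0 := by
  have hl := congrArg Real.log h
  rw [Real.log_zpow, Real.log_one] at hl
  have hne := Real.log_ne_zero_of_pos_of_ne_one ht ht1
  have hz : (z:ℝ) = 0 := by
    rcases mul_eq_zero.mp hl with h' | h'
    · exact h'
    · exact absurd h' hne
  exact_mod_cast hz

private lemma sum_card (L : ℕ) (ω : ℤ → ℤ) (hω : ∀ n, ω n = 1 ∨ ω n = -1) :
    (∑ i ∈ Finset.range L, ω (i:ℤ)) =
      (((Finset.range L).filter fun i : ℕ => ω (i:ℤ) = 1).card : ℤ) -
      (((Finset.range L).filter fun i : ℕ => ω (i:ℤ) = -1).card : ℤ) := by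
  induction L with
  | zero => simp
  | succ m ih =>
      rw [Finset.sum_range_succ, Finset.range_add_one, Finset.filter_insert, Finset.filter_insert]
      rcases hω m with h | h
      · rw [if_pos h, if_neg (by omega)]
        rw [Finset.card_insert_of_notMem (by simp)]
        push_cast
        omega
      · rw [if_neg (by omega), if_pos h]
        rw [Finset.card_insert_of_notMem (by simp)]
        push_cast
        omega

private lemma card_sum (L : ℕ) (ω : ℤ → ℤ) (hω : ∀ n, ω n = 1 ∨ ω n = -1) :
    (((Finset.range L).filter fun i : ℕ => ω (i:ℤ) = 1).card) +
    (((Finset.range L).filter fun i : ℕ => ω (i:ℤ) = -1).card) = L := by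
  have h := Finset.card_filter_add_card_filter_not
    (s := Finset.range L) (p := fun i : ℕ => ω (i:ℤ) = 1)
  have h2 : (Finset.range L).filter (fun i : ℕ => ¬ ω (i:ℤ) = 1) =
      (Finset.range L).filter (fun i : ℕ => ω (i:ℤ) = -1) := by
    apply Finset.filter_congr; intro i _; rcases hω i with h' | h' <;> simp [h']
  rw [h2] at h
  simpa using h

private lemma sum_shift (L : ℕ) (ω : ℤ → ℤ) (hper : ∀ n : ℤ, ω (n + L) = ω n) :
    ∀ n : ℤ, ∑ i ∈ Finset.range L, ω (n + i) = ∑ i ∈ Finset.range L, ω (i:ℤ) := by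
  have step : ∀ n : ℤ, ∑ i ∈ Finset.range L, ω ((n+1) + i) = ∑ i ∈ Finset.range L, ω (n + i) := by
    intro n
    have e1 : ∑ i ∈ Finset.range (L+1), ω (n + i) =
        (∑ i ∈ Finset.range L, ω (n + (i+1))) + ω (n + 0) := Finset.sum_range_succ' _ L
    have e2 : ∑ i ∈ Finset.range (L+1), ω (n + i) =
        (∑ i ∈ Finset.range L, ω (n + i)) + ω (n + L) := Finset.sum_range_succ _ L
    have e3 : ∑ i ∈ Finset.range L, ω (n + (i+1)) = ∑ i ∈ Finset.range L, ω ((n+1) + i) := by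
      apply Finset.sum_congr rfl; intro i _; congr 1; push_cast; ring
    have e4 : ω (n + L) = ω (n + 0) := by
      rw [show n + (L:ℤ) = (n + 0) + L by ring, hper]
    omega
  intro n
  induction n using Int.induction_on with
  | zero => simp
  | succ i ih => rw [step]; exact ih
  | pred i ih =>
      have h := step (-(i:ℤ) - 1)
      rw [show (-(i:ℤ) - 1) + 1 = -(i:ℤ) by ring] at h
      omega

/-- One-dimensional pasting construction (Theorem 4): a periodic continuous function can
be built by pasting scaled copies of `φ₀` (with orientations `ω_n = ±1`) iff the period
`L` is even and within each period equally many `ω_n` equal `+1` and `−1`. -/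
theorem stmt11 (φ₀ : ℝ → ℝ)
    (hcont : ContinuousOn φ₀ (Set.Icc (-(1 / 2 : ℝ)) (1 / 2)))
    (hpos : ∀ x ∈ Set.Icc (-(1 / 2 : ℝ)) (1 / 2), 0 < φ₀ x)
    (hhk : φ₀ (-(1 / 2)) ≠ φ₀ (1 / 2))
    (L : ℕ) (hL : 0 < L) (ω : ℤ → ℤ) (hω : ∀ n, ω n = 1 ∨ ω n = -1)
    (hper : ∀ n : ℤ, ω (n + L) = ω n) :
    (∃ (ψ : ℝ → ℝ) (c : ℤ → ℝ), (∀ n, 0 < c n) ∧ Continuous ψ ∧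
      (∀ x : ℝ, ψ (x + L) = ψ x) ∧
      (∀ n : ℤ, ∀ x ∈ Set.Ioo ((n : ℝ) - 1 / 2) ((n : ℝ) + 1 / 2),
        ψ x = c n * φ₀ ((ω n : ℝ) * (x - n)))) ↔
    (Even L ∧
      ((Finset.range L).filter fun i : ℕ => ω (i : ℤ) = 1).card =
      ((Finset.range L).filter fun i : ℕ => ω (i : ℤ) = -1).card) := by
  have hh : 0 < φ₀ (-(1/2)) := hpos _ (by constructor <;> norm_num)
  have hk : 0 < φ₀ (1/2) := hpos _ (by constructor <;> norm_num)
  set t : ℝ := φ₀ (1/2) / φ₀ (-(1/2)) with ht_def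
  have ht : 0 < t := div_pos hk hh
  have ht1 : t ≠ 1 := by
    intro e
    exact hhk ((div_eq_one_iff_eq hh.ne').mp e).symm
  have hargmem : ∀ n : ℤ, ∀ s : ℝ, s = 1/2 ∨ s = -(1/2) →
      ((ω n : ℝ) * s) ∈ Set.Icc (-(1/2 : ℝ)) (1/2) := by
    intro n s hs
    rw [Set.mem_Icc]
    rcases hω n with h | h <;> rcases hs with rfl | rfl <;> rw [h] <;> push_cast <;>
      constructor <;> norm_num
  have hmaps : ∀ n : ℤ, Set.MapsTo (fun x : ℝ => (ω n : ℝ) * (x - n))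
      (Set.Icc ((n:ℝ) - 1/2) ((n:ℝ) + 1/2)) (Set.Icc (-(1/2 : ℝ)) (1/2)) := by
    intro n x hx
    rw [Set.mem_Icc] at hx
    simp only [Set.mem_Icc]
    rcases hω n with h | h <;> rw [h] <;> push_cast <;> constructor <;> nlinarith [hx.1, hx.2]
  have hmodel : ∀ (c : ℤ → ℝ) (n : ℤ), ContinuousOn (fun x : ℝ => c n * φ₀ ((ω n : ℝ) * (x - n)))
      (Set.Icc ((n:ℝ) - 1/2) ((n:ℝ) + 1/2)) := by
    intro c n
    apply ContinuousOn.mul continuousOn_const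
    exact hcont.comp ((continuous_const.mul (continuous_id.sub continuous_const)).continuousOn)
      (hmaps n)
  constructor
  · rintro ⟨ψ, c, hc, hcψ, hperψ, hcell⟩
    have glue : ∀ n : ℤ, c n * φ₀ ((ω n : ℝ) * (1/2)) = c (n+1) * φ₀ ((ω (n+1) : ℝ) * (-(1/2))) := by
      intro n
      set x₀ : ℝ := (n:ℝ) + 1/2 with hx₀
      have hlt : (n:ℝ) - 1/2 < x₀ := by rw [hx₀]; linarith
      haveI hne1 : (nhdsWithin x₀ (Set.Ioo ((n:ℝ) - 1/2) ((n:ℝ) + 1/2))).NeBot := by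
        rw [nhdsWithin_Ioo_eq_nhdsLT hlt]; infer_instance
      have hmem₀ : x₀ ∈ Set.Icc ((n:ℝ) - 1/2) ((n:ℝ) + 1/2) := by
        constructor <;> rw [hx₀] <;> linarith
      have hv : (ω n : ℝ) * (x₀ - n) = (ω n : ℝ) * (1/2) := by rw [hx₀]; ring
      have h1 : Filter.Tendsto (fun x : ℝ => c n * φ₀ ((ω n : ℝ) * (x - n)))
          (nhdsWithin x₀ (Set.Ioo ((n:ℝ) - 1/2) ((n:ℝ) + 1/2)))
          (nhds (c n * φ₀ ((ω n : ℝ) * (1/2)))) := by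
        have h0 := (hmodel c n) x₀ hmem₀
        unfold ContinuousWithinAt at h0
        simp only [hv] at h0
        exact h0.mono_left (nhdsWithin_mono _ Set.Ioo_subset_Icc_self)
      have h1' : Filter.Tendsto ψ
          (nhdsWithin x₀ (Set.Ioo ((n:ℝ) - 1/2) ((n:ℝ) + 1/2)))
          (nhds (c n * φ₀ ((ω n : ℝ) * (1/2)))) := by
        apply Filter.Tendsto.congr' _ h1
        filter_upwards [self_mem_nhdsWithin] with y hy
        exact (hcell n y hy).symm
      have h2 : Filter.Tendsto ψ
          (nhdsWithin x₀ (Set.Ioo ((n:ℝ) - 1/2) ((n:ℝ) + 1/2))) (nhds (ψ x₀)) :=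
        (hcψ.tendsto x₀).mono_left nhdsWithin_le_nhds
      have eL : c n * φ₀ ((ω n : ℝ) * (1/2)) = ψ x₀ := tendsto_nhds_unique h1' h2
      -- right cell
      have hlo : (((n+1 : ℤ)):ℝ) - 1/2 = x₀ := by push_cast; rw [hx₀]; ring
      have hhi : x₀ < (((n+1 : ℤ)):ℝ) + 1/2 := by push_cast; rw [hx₀]; linarith
      haveI hne3 : (nhdsWithin x₀ (Set.Ioo ((((n+1:ℤ)):ℝ) - 1/2) ((((n+1:ℤ)):ℝ) + 1/2))).NeBot := by
        rw [hlo, nhdsWithin_Ioo_eq_nhdsGT hhi]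
        infer_instance
      have hmem₁ : x₀ ∈ Set.Icc ((((n+1:ℤ)):ℝ) - 1/2) ((((n+1:ℤ)):ℝ) + 1/2) :=
        ⟨hlo.le, hhi.le⟩
      have hv2 : (ω (n+1) : ℝ) * (x₀ - ((n+1:ℤ):ℝ)) = (ω (n+1) : ℝ) * (-(1/2)) := by
        push_cast
        rw [hx₀]
        ring
      have h3 : Filter.Tendsto (fun x : ℝ => c (n+1) * φ₀ ((ω (n+1) : ℝ) * (x - ((n+1:ℤ):ℝ))))
          (nhdsWithin x₀ (Set.Ioo ((((n+1:ℤ)):ℝ) - 1/2) ((((n+1:ℤ)):ℝ) + 1/2)))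
          (nhds (c (n+1) * φ₀ ((ω (n+1) : ℝ) * (-(1/2))))) := by
        have h0 := (hmodel c (n+1)) x₀ hmem₁
        unfold ContinuousWithinAt at h0
        simp only [hv2] at h0
        exact h0.mono_left (nhdsWithin_mono _ Set.Ioo_subset_Icc_self)
      have h3' : Filter.Tendsto ψ
          (nhdsWithin x₀ (Set.Ioo ((((n+1:ℤ)):ℝ) - 1/2) ((((n+1:ℤ)):ℝ) + 1/2)))
          (nhds (c (n+1) * φ₀ ((ω (n+1) : ℝ) * (-(1/2))))) := by
        apply Filter.Tendsto.congr' _ h3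
        filter_upwards [self_mem_nhdsWithin] with y hy
        exact (hcell (n+1) y hy).symm
      have h4 : Filter.Tendsto ψ
          (nhdsWithin x₀ (Set.Ioo ((((n+1:ℤ)):ℝ) - 1/2) ((((n+1:ℤ)):ℝ) + 1/2))) (nhds (ψ x₀)) :=
        (hcψ.tendsto x₀).mono_left nhdsWithin_le_nhds
      have eR : c (n+1) * φ₀ ((ω (n+1) : ℝ) * (-(1/2))) = ψ x₀ := tendsto_nhds_unique h3' h4
      rw [eL, eR]
    -- recursion
    have step : ∀ n : ℤ, c (n+1) * φ₀ ((ω (n+1) : ℝ) * (-(1/2))) =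
        (c n * φ₀ ((ω n : ℝ) * (-(1/2)))) * t ^ (ω n) := by
      intro n
      rw [← glue n]
      rcases hω n with h | h
      · rw [h]
        simp only [Int.cast_one, one_mul, zpow_one]
        rw [ht_def]
        field_simp
      · rw [h]
        simp only [Int.cast_neg, Int.cast_one, neg_mul, one_mul, neg_neg, zpow_neg_one]
        rw [ht_def]
        field_simp
        try ring
    have dsum : ∀ m : ℕ, c m * φ₀ ((ω m : ℝ) * (-(1/2))) =
        (c 0 * φ₀ ((ω 0 : ℝ) * (-(1/2)))) * t ^ (∑ i ∈ Finset.range m, ω (i:ℤ)) := by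
      intro m
      induction m with
      | zero => simp
      | succ p ih =>
          have h : ((p+1 : ℕ) : ℤ) = (p:ℤ) + 1 := by push_cast; ring
          rw [h, step, ih, Finset.sum_range_succ, zpow_add₀ ht.ne']
          ring
    have hzero_mem : (0:ℝ) ∈ Set.Icc (-(1/2 : ℝ)) (1/2) := by constructor <;> norm_num
    have hφ0 : 0 < φ₀ 0 := hpos _ hzero_mem
    have e0 : ψ 0 = c 0 * φ₀ 0 := by
      have h := hcell 0 0 (by constructor <;> norm_num)
      simpa using h
    have eL' : ψ (0 + (L:ℝ)) = c (L:ℤ) * φ₀ 0 := by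
      have h := hcell (L:ℤ) ((L:ℤ):ℝ) (by constructor <;> push_cast <;> linarith)
      rw [zero_add]
      push_cast at h ⊢
      simpa using h
    have hcL : c (L:ℤ) = c 0 := by
      have h := hperψ 0
      rw [e0, eL'] at h
      exact mul_right_cancel₀ hφ0.ne' h
    have hω0 : ω (L:ℤ) = ω 0 := by have h := hper 0; rwa [zero_add] at h
    have hSL : (∑ i ∈ Finset.range L, ω (i:ℤ)) = 0 := by
      have h := dsum L
      rw [hcL, hω0] at h
      have hd0 : c 0 * φ₀ ((ω 0 : ℝ) * (-(1/2))) ≠ 0 :=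
        (mul_pos (hc 0) (hpos _ (hargmem 0 _ (Or.inr rfl)))).ne'
      have h1 : t ^ (∑ i ∈ Finset.range L, ω (i:ℤ)) = 1 := by
        have h2 := h.symm
        rw [mul_comm] at h2
        nth_rewrite 2 [← one_mul (c 0 * φ₀ ((ω 0 : ℝ) * (-(1/2))))] at h2
        exact mul_right_cancel₀ hd0 h2
      exact zpow_eq_one_imp ht ht1 h1
    have hsc := sum_card L ω hω
    have hcs := card_sum L ω hω
    rw [hSL] at hsc
    have hcards : ((Finset.range L).filter fun i : ℕ => ω (i : ℤ) = 1).card =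
        ((Finset.range L).filter fun i : ℕ => ω (i : ℤ) = -1).card := by omega
    exact ⟨⟨((Finset.range L).filter fun i : ℕ => ω (i : ℤ) = 1).card, by omega⟩, hcards⟩
  · rintro ⟨_, hcards⟩
    have hSL : (∑ i ∈ Finset.range L, ω (i:ℤ)) = 0 := by
      have hsc := sum_card L ω hω
      rw [hcards] at hsc
      omega
    have Aper : ∀ n : ℤ, Aw ω (n + L) = Aw ω n := by
      intro n
      rw [Aw_add_nat, sum_shift L ω hper n, hSL, add_zero]
    have hφn : ∀ n : ℤ, 0 < φ₀ ((ω n : ℝ) * (-(1/2))) :=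
      fun n => hpos _ (hargmem n _ (Or.inr rfl))
    set c : ℤ → ℝ := fun n => t ^ (Aw ω n) / φ₀ ((ω n : ℝ) * (-(1/2))) with hc_def
    have hcpos : ∀ n, 0 < c n := fun n => div_pos (zpow_pos ht _) (hφn n)
    set ψ : ℝ → ℝ := fun x => c (round x) * φ₀ ((ω (round x) : ℝ) * (x - round x)) with hψ_def
    have hround : ∀ (n : ℤ) (x : ℝ), (n:ℝ) - 1/2 ≤ x → x < (n:ℝ) + 1/2 → round x = n := by
      intro n x h1 h2
      rw [round_eq, Int.floor_eq_iff]
      constructor <;> push_cast <;> linarith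
    have hglue : ∀ n : ℤ, c (n+1) * φ₀ ((ω (n+1) : ℝ) * (-(1/2))) =
        c n * φ₀ ((ω n : ℝ) * (1/2)) := by
      intro n
      have hL1 : c (n+1) * φ₀ ((ω (n+1) : ℝ) * (-(1/2))) = t ^ (Aw ω (n+1)) := by
        simp only [hc_def]
        exact div_mul_cancel₀ _ (hφn (n+1)).ne'
      rw [hL1, Aw_succ]
      simp only [hc_def]
      rcases hω n with h | h
      · rw [h, zpow_add₀ ht.ne', zpow_one]
        simp only [h, Int.cast_one, one_mul]
        rw [ht_def]
        field_simp
        try ring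
      · rw [h, zpow_add₀ ht.ne']
        simp only [h, Int.cast_neg, Int.cast_one, neg_mul, one_mul, neg_neg, zpow_neg_one]
        rw [ht_def]
        field_simp
        try ring
    have hEq : ∀ n : ℤ, ∀ x ∈ Set.Icc ((n:ℝ) - 1/2) ((n:ℝ) + 1/2),
        ψ x = c n * φ₀ ((ω n : ℝ) * (x - n)) := by
      intro n x hx
      rcases eq_or_lt_of_le hx.2 with heq | hlt
      · have hr : round x = n + 1 := by
          apply hround <;> push_cast <;> linarith
        simp only [hψ_def]
        rw [hr]
        have hv : x - ((n+1 : ℤ):ℝ) = -(1/2) := by push_cast; linarith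
        rw [hv, hglue n]
        have hv2 : x - (n:ℝ) = 1/2 := by linarith
        rw [hv2]
      · have hr : round x = n := hround n x hx.1 hlt
        simp only [hψ_def]
        rw [hr]
    have hcψ : Continuous ψ := by
      rw [continuous_iff_continuousAt]
      intro x
      set n : ℤ := round x with hn
      have hb1 : (n:ℝ) - 1/2 ≤ x := by
        have h := Int.floor_le (x + 1/2)
        rw [← round_eq, ← hn] at h
        linarith
      have hb2 : x < (n:ℝ) + 1/2 := by
        have h := Int.lt_floor_add_one (x + 1/2)
        rw [← round_eq, ← hn] at h
        linarith
      rcases eq_or_lt_of_le hb1 with heq | hlt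
      · have hxmem : x ∈ Set.Icc ((((n-1:ℤ)):ℝ) - 1/2) ((((n-1:ℤ)):ℝ) + 1/2) := by
          constructor <;> push_cast <;> linarith
        have cwL : ContinuousWithinAt ψ (Set.Icc ((((n-1:ℤ)):ℝ) - 1/2) ((((n-1:ℤ)):ℝ) + 1/2)) x :=
          ((hmodel c (n-1)) x hxmem).congr (fun y hy => hEq (n-1) y hy) (hEq (n-1) x hxmem)
        have memL : Set.Icc ((((n-1:ℤ)):ℝ) - 1/2) ((((n-1:ℤ)):ℝ) + 1/2) ∈
            nhdsWithin x (Set.Iic x) := by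
          rw [mem_nhdsWithin]
          refine ⟨Set.Ioi ((((n-1:ℤ)):ℝ) - 1/2), isOpen_Ioi, ?_, ?_⟩
          · show (((n-1:ℤ)):ℝ) - 1/2 < x
            push_cast
            linarith
          · rintro y ⟨hy1, hy2⟩
            have hyx : y ≤ x := hy2
            rw [Set.mem_Icc]
            constructor
            · exact le_of_lt hy1
            · push_cast
              push_cast at hy1
              linarith
        have cL : ContinuousWithinAt ψ (Set.Iic x) x := cwL.mono_of_mem_nhdsWithin memL
        have hxmem2 : x ∈ Set.Icc ((n:ℝ) - 1/2) ((n:ℝ) + 1/2) := ⟨hb1, hb2.le⟩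
        have cwR : ContinuousWithinAt ψ (Set.Icc ((n:ℝ) - 1/2) ((n:ℝ) + 1/2)) x :=
          ((hmodel c n) x hxmem2).congr (fun y hy => hEq n y hy) (hEq n x hxmem2)
        have memR : Set.Icc ((n:ℝ) - 1/2) ((n:ℝ) + 1/2) ∈ nhdsWithin x (Set.Ici x) := by
          rw [mem_nhdsWithin]
          refine ⟨Set.Iio ((n:ℝ) + 1/2), isOpen_Iio, hb2, ?_⟩
          rintro y ⟨hy1, hy2⟩
          have hxy : x ≤ y := hy2
          rw [Set.mem_Icc]
          exact ⟨by linarith [heq], le_of_lt hy1⟩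
        have cR : ContinuousWithinAt ψ (Set.Ici x) x := cwR.mono_of_mem_nhdsWithin memR
        have hu := cL.union cR
        rw [Set.Iic_union_Ici] at hu
        exact (continuousWithinAt_univ ψ x).mp hu
      · have hmem : Set.Icc ((n:ℝ) - 1/2) ((n:ℝ) + 1/2) ∈ nhds x := Icc_mem_nhds hlt hb2
        have hca : ContinuousAt (fun y : ℝ => c n * φ₀ ((ω n : ℝ) * (y - n))) x :=
          (hmodel c n).continuousAt hmem
        apply hca.congr
        apply Filter.eventuallyEq_of_mem hmem
        intro y hy
        exact (hEq n y hy).symm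
    have hψper : ∀ x : ℝ, ψ (x + L) = ψ x := by
      intro x
      have hcast : ((L:ℕ):ℝ) = (((L:ℕ):ℤ):ℝ) := by push_cast; ring
      have hr : round (x + (L:ℝ)) = round x + (L:ℤ) := by
        rw [hcast, round_add_intCast]
      simp only [hψ_def]
      rw [hr]
      have hc' : c (round x + L) = c (round x) := by
        simp only [hc_def]
        rw [Aper, hper]
      have hω' : ω (round x + L) = ω (round x) := hper _
      rw [hc', hω']
      congr 2
      push_cast
      ring
    refine ⟨ψ, c, hcpos, hcψ, hψper, ?_⟩
    intro n x hx
    exact hEq n x ⟨hx.1.le, hx.2.le⟩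
end
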